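/- In the preferential attachment model, for every i ≥ 1, lim_{n→∞} (1/a_n^{(i)}) Σ_{d=1}^i b_d^{(i)} (a_{n+1}^{(i)} ν_{n+1}(d) − a_n^{(i)} ν_n(d)) = b_1^{(i)}, where ν_n(d) = E[N_n(d)]. -/

import Mathlib

open MeasureTheory ProbabilityTheory Filter Finset

/-- The undirected preferential attachment model with parameter `δ > -1`.
`C n` is the node that node `n+1` attaches to (`0` meaning a self-loop),
`D n v` is the degree of node `v` in the graph `G n`, and `F` is the filtration
generated by the evolution of the graph. -/
structure PAModel {Ω : Type} (mΩ : MeasurableSpace Ω) (μ : Measure Ω) (δ : ℝ) : Type where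
  F : Filtration ℕ mΩ
  C : ℕ → Ω → ℕ
  D : ℕ → ℕ → Ω → ℕ
  C_le : ∀ n ω, 1 ≤ n → C n ω ≤ n
  C_meas : ∀ n, Measurable[F (n + 1)] (C n)
  D_one_one : ∀ ω, D 1 1 ω = 2
  D_one_ne : ∀ v ω, v ≠ 1 → D 1 v ω = 0
  D_meas : ∀ n v, Measurable[F n] (D n v)
  D_succ_old : ∀ n v ω, 1 ≤ v → v ≤ n →
    D (n + 1) v ω = D n v ω + if C n ω = v then 1 else 0
  D_succ_new : ∀ n ω, 1 ≤ n → D (n + 1) (n + 1) ω = if C n ω = 0 then 2 else 1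
  D_succ_out : ∀ n v ω, n + 1 < v → D (n + 1) v ω = 0
  attach_prob : ∀ n v, 1 ≤ v → v ≤ n →
    μ[Set.indicator {ω | C n ω = v} (fun _ => (1 : ℝ)) | F n]
      =ᵐ[μ] fun ω => ((D n v ω : ℝ) + δ) / (n * (2 + δ) + (1 + δ))
  self_prob : ∀ n, 1 ≤ n →
    μ[Set.indicator {ω | C n ω = 0} (fun _ => (1 : ℝ)) | F n]
      =ᵐ[μ] fun _ => (1 + δ) / (n * (2 + δ) + (1 + δ))

namespace PAModel

variable {Ω : Type} {mΩ : MeasurableSpace Ω} {μ : Measure Ω} {δ : ℝ}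

/-- `N n k` is the number of nodes of degree `k` in the graph `G n`. -/
noncomputable def N (M : PAModel mΩ μ δ) (n k : ℕ) (ω : Ω) : ℝ :=
  ((Finset.Icc 1 n).filter (fun v => M.D n v ω = k)).card

end PAModel

/-- `bcoef δ k j` is `b_j^{(k)} = (−1)^{k−j} Γ(k+δ)/((k−j)! Γ(j+δ))` for `j ≤ k`,
with the convention `b_j^{(k)} = 0` for `j > k`. -/
noncomputable def bcoef (δ : ℝ) (k j : ℕ) : ℝ :=
  if j ≤ k then
    (-1 : ℝ) ^ (k - j) * Real.Gamma (k + δ) / ((Nat.factorial (k - j)) * Real.Gamma (j + δ))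
  else 0

/-- `pk δ k` is the limiting degree frequency
`p_k = c(δ) Γ(k+δ)/Γ(k+3+2δ)` with `c(δ) = (2+δ)Γ(3+2δ)/Γ(1+δ)`, and `p_0 = 0`. -/
noncomputable def pk (δ : ℝ) (k : ℕ) : ℝ :=
  if k = 0 then 0
  else (2 + δ) * Real.Gamma (3 + 2 * δ) / Real.Gamma (1 + δ)
    * Real.Gamma (k + δ) / Real.Gamma (k + 3 + 2 * δ)

/-- `aseq δ k n` is `a_n^{(k)} = [∏_{i=k}^{n−1} (1 − (k+δ)/(i(2+δ)+1+δ))]⁻¹`. -/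
noncomputable def aseq (δ : ℝ) (k n : ℕ) : ℝ :=
  (∏ i ∈ Finset.Ico k n, (1 - ((k : ℝ) + δ) / (i * (2 + δ) + 1 + δ)))⁻¹


lemma bcoef_rec {δ : ℝ} (hδ : -1 < δ) {i d : ℕ} (hd : 1 ≤ d) (hdi : d ≤ i) :
    bcoef δ i (d + 1) * ((d : ℝ) + δ) = -(((i : ℝ) - (d : ℝ)) * bcoef δ i d) := by
  rcases eq_or_lt_of_le hdi with rfl | hlt
  · simp [bcoef]
  · have hd1 : d + 1 ≤ i := hlt
    have hdpos : (0 : ℝ) < (d : ℝ) + δ := by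
      have : (1 : ℝ) ≤ (d : ℝ) := by exact_mod_cast hd
      linarith
    have hΓd : Real.Gamma ((d : ℝ) + δ) ≠ 0 := ne_of_gt (Real.Gamma_pos_of_pos hdpos)
    obtain ⟨p, hp⟩ : ∃ p, i - d = p + 1 := ⟨i - d - 1, by omega⟩
    have h1 : i - (d + 1) = p := by omega
    have hΓ : Real.Gamma (((d : ℕ) + 1 : ℕ) + δ) = ((d : ℝ) + δ) * Real.Gamma ((d : ℝ) + δ) := by
      push_cast
      rw [show (d : ℝ) + 1 + δ = ((d : ℝ) + δ) + 1 by ring]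
      exact Real.Gamma_add_one (ne_of_gt hdpos)
    have hcast : (i : ℝ) - (d : ℝ) = (p : ℝ) + 1 := by
      have := Nat.cast_sub hdi (R := ℝ)
      rw [hp] at this
      push_cast at this
      linarith
    simp only [bcoef, if_pos hd1, if_pos hdi, h1, hp, hΓ, hcast]
    have hfp : ((Nat.factorial p : ℝ)) ≠ 0 := by exact_mod_cast (Nat.factorial_pos p).ne'
    rw [Nat.factorial_succ]
    push_cast
    field_simp
    ring

lemma sum_Icc_one (i : ℕ) (f : ℕ → ℝ) : ∑ d ∈ Icc 1 i, f d = ∑ j ∈ range i, f (j + 1) := by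
  rw [← Finset.Ico_add_one_right_eq_Icc, Finset.sum_Ico_eq_sum_range]
  simp [add_comm]

lemma cancel {δ : ℝ} (hδ : -1 < δ) {i : ℕ} (hi : 1 ≤ i) (x : ℕ → ℝ) (hx0 : x 0 = 0) :
    ∑ d ∈ Icc 1 i, (bcoef δ i d * (((i : ℝ) - (d : ℝ)) * x d)
      + bcoef δ i d * ((((d : ℝ) - 1) + δ) * x (d - 1))) = 0 := by
  rw [sum_Icc_one]
  set G : ℕ → ℝ := fun j => bcoef δ i j * (((i : ℝ) - (j : ℝ)) * x j) with hG
  have hstep : ∀ j ∈ range i,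
      (bcoef δ i (j + 1) * (((i : ℝ) - ((j + 1 : ℕ) : ℝ)) * x (j + 1))
        + bcoef δ i (j + 1) * (((((j + 1 : ℕ) : ℝ) - 1) + δ) * x (j + 1 - 1)))
      = G (j + 1) - G j := by
    intro j hj
    have hji : j < i := mem_range.mp hj
    simp only [hG, Nat.add_sub_cancel]
    rcases Nat.eq_zero_or_pos j with rfl | hjpos
    · simp [hx0]
    · have hrec := bcoef_rec hδ hjpos (le_of_lt hji)
      push_cast
      linear_combination (x j) * hrec
  rw [Finset.sum_congr rfl hstep, Finset.sum_range_sub G]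
  have h1 : G i = 0 := by simp [hG]
  have h2 : G 0 = 0 := by simp [hG, hx0]
  rw [h1, h2, sub_zero]

lemma alg {δ : ℝ} (hδ : -1 < δ) {i : ℕ} (hi : 1 ≤ i) {c : ℝ} (hc : c ≠ 0)
    (hfac : 1 - ((i : ℝ) + δ) / c ≠ 0) (x : ℕ → ℝ) (hx0 : x 0 = 0) :
    ∑ d ∈ Icc 1 i, bcoef δ i d *
      ((1 - ((i : ℝ) + δ) / c)⁻¹ * ((1 - ((d : ℝ) + δ) / c) * x d
          + ((((d : ℝ) - 1) + δ) / c) * x (d - 1)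
          + (if d = 1 then 1 - (1 + δ) / c else if d = 2 then (1 + δ) / c else 0)) - x d)
    = (1 - ((i : ℝ) + δ) / c)⁻¹
        * (bcoef δ i 1 * (1 - (1 + δ) / c) + bcoef δ i 2 * ((1 + δ) / c)) := by
  set r : ℝ := (1 - ((i : ℝ) + δ) / c)⁻¹ with hrdef
  have hr : r * (1 - ((i : ℝ) + δ) / c) = 1 := inv_mul_cancel₀ hfac
  have hterm : ∀ d ∈ Icc 1 i,
      bcoef δ i d *
        (r * ((1 - ((d : ℝ) + δ) / c) * x d + ((((d : ℝ) - 1) + δ) / c) * x (d - 1)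
          + (if d = 1 then 1 - (1 + δ) / c else if d = 2 then (1 + δ) / c else 0)) - x d)
      = (r / c) * (bcoef δ i d * (((i : ℝ) - (d : ℝ)) * x d)
          + bcoef δ i d * ((((d : ℝ) - 1) + δ) * x (d - 1)))
        + bcoef δ i d * r *
          (if d = 1 then 1 - (1 + δ) / c else if d = 2 then (1 + δ) / c else 0) := by
    intro d _
    linear_combination (bcoef δ i d * x d) * hr
  rw [Finset.sum_congr rfl hterm, Finset.sum_add_distrib, ← Finset.mul_sum,
    cancel hδ hi x hx0, mul_zero, zero_add]
  have hE : ∀ d : ℕ,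
      (if d = 1 then 1 - (1 + δ) / c else if d = 2 then (1 + δ) / c else (0:ℝ))
      = (if d = 1 then (1:ℝ) else 0) * (1 - (1 + δ) / c)
        + (if d = 2 then (1:ℝ) else 0) * ((1 + δ) / c) := by
    intro d
    split_ifs with h1 h2 <;> simp_all
  simp_rw [hE, mul_add]
  rw [Finset.sum_add_distrib]
  have hsum1 : ∑ d ∈ Icc 1 i, bcoef δ i d * r * ((if d = 1 then (1:ℝ) else 0) * (1 - (1 + δ) / c))
      = r * (bcoef δ i 1 * (1 - (1 + δ) / c)) := by
    rw [Finset.sum_eq_single 1]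
    · simp; ring
    · intro b _ hb; simp [hb]
    · intro h; exact absurd (Finset.mem_Icc.mpr ⟨le_refl 1, hi⟩) h
  have hsum2 : ∑ d ∈ Icc 1 i, bcoef δ i d * r * ((if d = 2 then (1:ℝ) else 0) * ((1 + δ) / c))
      = r * (bcoef δ i 2 * ((1 + δ) / c)) := by
    by_cases h2i : 2 ≤ i
    · rw [Finset.sum_eq_single 2]
      · simp; ring
      · intro b _ hb; simp [hb]
      · intro h; exact absurd (Finset.mem_Icc.mpr ⟨by norm_num, h2i⟩) h
    · have hi1 : i = 1 := by omega
      subst hi1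
      have hb2 : bcoef δ 1 2 = 0 := by
        rw [bcoef]
        norm_num
      simp [hb2]
  rw [hsum1, hsum2]


namespace PAModel

variable {Ω : Type} {mΩ : MeasurableSpace Ω} {μ : Measure Ω} [IsProbabilityMeasure μ] {δ : ℝ}

lemma measurableSet_D' (M : PAModel mΩ μ δ) (n v d : ℕ) :
    MeasurableSet[M.F n] {ω | M.D n v ω = d} :=
  M.D_meas n v (measurableSet_singleton d)

lemma measurableSet_D (M : PAModel mΩ μ δ) (n v d : ℕ) :
    MeasurableSet {ω | M.D n v ω = d} :=
  M.F.le n _ (M.measurableSet_D' n v d)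

lemma measurableSet_C (M : PAModel mΩ μ δ) (n v : ℕ) :
    MeasurableSet {ω | M.C n ω = v} :=
  M.F.le (n + 1) _ (M.C_meas n (measurableSet_singleton v))

lemma intInd {s : Set Ω} (hs : MeasurableSet s) :
    Integrable (s.indicator (fun _ => (1 : ℝ))) μ :=
  (integrable_const 1).indicator hs

lemma N_eq_sum (M : PAModel mΩ μ δ) (n k : ℕ) (ω : Ω) :
    M.N n k ω = ∑ v ∈ Finset.Icc 1 n,
      ({ω' | M.D n v ω' = k}).indicator (fun _ => (1 : ℝ)) ω := by
  rw [PAModel.N, Finset.card_filter]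
  push_cast
  refine Finset.sum_congr rfl fun v _ => ?_
  simp [Set.indicator_apply]

lemma integral_N (M : PAModel mΩ μ δ) (n k : ℕ) :
    ∫ ω, M.N n k ω ∂μ = ∑ v ∈ Finset.Icc 1 n,
      ∫ ω, ({ω' | M.D n v ω' = k}).indicator (fun _ => (1 : ℝ)) ω ∂μ := by
  rw [show (fun ω => M.N n k ω) = fun ω => ∑ v ∈ Finset.Icc 1 n,
      ({ω' | M.D n v ω' = k}).indicator (fun _ => (1 : ℝ)) ω from funext (M.N_eq_sum n k)]
  exact integral_finset_sum _ fun v _ => intInd (M.measurableSet_D n v k)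

lemma attach_integral (M : PAModel mΩ μ δ) {n v : ℕ} (h1 : 1 ≤ v) (h2 : v ≤ n) (d : ℕ) :
    ∫ ω, ({ω' | M.D n v ω' = d} ∩ {ω' | M.C n ω' = v}).indicator (fun _ => (1 : ℝ)) ω ∂μ
      = (((d : ℝ) + δ) / ((n : ℝ) * (2 + δ) + (1 + δ)))
        * ∫ ω, ({ω' | M.D n v ω' = d}).indicator (fun _ => (1 : ℝ)) ω ∂μ := by
  have hA' : MeasurableSet[M.F n] {ω | M.D n v ω = d} := M.measurableSet_D' n v d
  have hA : MeasurableSet {ω | M.D n v ω = d} := M.measurableSet_D n v d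
  have hCi : Integrable ({ω' | M.C n ω' = v}.indicator fun _ => (1 : ℝ)) μ :=
    intInd (M.measurableSet_C n v)
  rw [← Set.indicator_indicator, integral_indicator hA,
    ← setIntegral_condExp (M.F.le n) hCi hA']
  rw [setIntegral_congr_ae hA ((M.attach_prob n v h1 h2).mono fun ω hω _ => hω)]
  have heq : ∀ ω ∈ {ω | M.D n v ω = d},
      ((M.D n v ω : ℝ) + δ) / ((n : ℝ) * (2 + δ) + (1 + δ))
        = ((d : ℝ) + δ) / ((n : ℝ) * (2 + δ) + (1 + δ)) := by
    intro ω hω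
    simp only [Set.mem_setOf_eq] at hω
    rw [hω]
  rw [setIntegral_congr_fun hA heq, setIntegral_const, integral_indicator_const _ hA]
  simp [mul_comm]

lemma self_integral (M : PAModel mΩ μ δ) {n : ℕ} (hn : 1 ≤ n) :
    ∫ ω, ({ω' | M.C n ω' = 0}).indicator (fun _ => (1 : ℝ)) ω ∂μ
      = (1 + δ) / ((n : ℝ) * (2 + δ) + (1 + δ)) := by
  rw [← integral_condExp (M.F.le n), integral_congr_ae (M.self_prob n hn)]
  simp


lemma D_ge_one (M : PAModel mΩ μ δ) : ∀ n v (ω : Ω), 1 ≤ v → v ≤ n → 1 ≤ M.D n v ω := by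
  intro n
  induction n with
  | zero => intro v ω h1 h2; omega
  | succ m ih =>
    intro v ω h1 h2
    rcases Nat.eq_zero_or_pos m with rfl | hm
    · interval_cases v
      rw [M.D_one_one ω]; omega
    · rcases Nat.lt_or_ge v (m + 1) with hv | hv
      · rw [M.D_succ_old m v ω h1 (by omega)]
        have := ih v ω h1 (by omega)
        omega
      · have hveq : v = m + 1 := by omega
        subst hveq
        rw [M.D_succ_new m ω hm]
        split <;> omega

lemma N_zero (M : PAModel mΩ μ δ) (n : ℕ) (ω : Ω) : M.N n 0 ω = 0 := by
  rw [PAModel.N]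
  norm_num
  intro v hv1 hv2
  have := M.D_ge_one n v ω hv1 hv2
  omega

lemma integral_N_rec (M : PAModel mΩ μ δ) {n d : ℕ} (hn : 1 ≤ n) (hd : 1 ≤ d) :
    ∫ ω, M.N (n + 1) d ω ∂μ
      = (1 - ((d : ℝ) + δ) / ((n : ℝ) * (2 + δ) + (1 + δ))) * ∫ ω, M.N n d ω ∂μ
        + ((((d : ℝ) - 1) + δ) / ((n : ℝ) * (2 + δ) + (1 + δ))) * ∫ ω, M.N n (d - 1) ω ∂μ
        + (if d = 1 then 1 - (1 + δ) / ((n : ℝ) * (2 + δ) + (1 + δ))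
            else if d = 2 then (1 + δ) / ((n : ℝ) * (2 + δ) + (1 + δ)) else 0) := by
  set c : ℝ := (n : ℝ) * (2 + δ) + (1 + δ) with hc
  -- step 1: decompose the integral over nodes
  rw [M.integral_N (n + 1) d, Finset.sum_Icc_succ_top (by omega : 1 ≤ n + 1)]
  -- old nodes
  have hold : ∀ v ∈ Finset.Icc 1 n,
      ∫ ω, ({ω' | M.D (n + 1) v ω' = d}).indicator (fun _ => (1 : ℝ)) ω ∂μ
        = (1 - ((d : ℝ) + δ) / c)
            * ∫ ω, ({ω' | M.D n v ω' = d}).indicator (fun _ => (1 : ℝ)) ω ∂μ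
          + ((((d : ℝ) - 1) + δ) / c)
            * ∫ ω, ({ω' | M.D n v ω' = d - 1}).indicator (fun _ => (1 : ℝ)) ω ∂μ := by
    intro v hv
    rw [Finset.mem_Icc] at hv
    have hpt : ∀ ω, ({ω' | M.D (n + 1) v ω' = d}).indicator (fun _ => (1 : ℝ)) ω
        = ({ω' | M.D n v ω' = d}).indicator (fun _ => (1 : ℝ)) ω
          - ({ω' | M.D n v ω' = d} ∩ {ω' | M.C n ω' = v}).indicator (fun _ => (1 : ℝ)) ω
          + ({ω' | M.D n v ω' = d - 1} ∩ {ω' | M.C n ω' = v}).indicator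
              (fun _ => (1 : ℝ)) ω := by
      intro ω
      simp only [Set.indicator_apply, Set.mem_inter_iff, Set.mem_setOf_eq,
        M.D_succ_old n v ω hv.1 hv.2]
      by_cases hcv : M.C n ω = v
      · simp only [hcv, if_true, and_true]
        have hiff : (M.D n v ω + 1 = d) ↔ (M.D n v ω = d - 1) := by omega
        rw [if_congr hiff rfl rfl]
        split_ifs <;> norm_num
      · simp only [hcv, if_false, and_false]
        norm_num
    rw [integral_congr_ae (Filter.Eventually.of_forall hpt)]
    have i1 : Integrable (({ω' | M.D n v ω' = d}).indicator (fun _ => (1 : ℝ))) μ :=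
      intInd (M.measurableSet_D n v d)
    have i2 : Integrable ((({ω' | M.D n v ω' = d}) ∩ {ω' | M.C n ω' = v}).indicator
        (fun _ => (1 : ℝ))) μ :=
      intInd ((M.measurableSet_D n v d).inter (M.measurableSet_C n v))
    have i3 : Integrable ((({ω' | M.D n v ω' = d - 1}) ∩ {ω' | M.C n ω' = v}).indicator
        (fun _ => (1 : ℝ))) μ :=
      intInd ((M.measurableSet_D n v (d - 1)).inter (M.measurableSet_C n v))
    have i12 : Integrable (fun ω => ({ω' | M.D n v ω' = d}).indicator (fun _ => (1 : ℝ)) ω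
        - ({ω' | M.D n v ω' = d} ∩ {ω' | M.C n ω' = v}).indicator (fun _ => (1 : ℝ)) ω) μ :=
      i1.sub i2
    rw [integral_add i12 i3, integral_sub i1 i2,
      M.attach_integral hv.1 hv.2 d, M.attach_integral hv.1 hv.2 (d - 1)]
    have hcast : ((d - 1 : ℕ) : ℝ) = (d : ℝ) - 1 := by
      have := Nat.cast_sub hd (R := ℝ)
      push_cast at this ⊢
      linarith
    rw [hcast]
    ring
  rw [Finset.sum_congr rfl hold, Finset.sum_add_distrib, ← Finset.mul_sum, ← Finset.mul_sum,
    ← M.integral_N n d, ← M.integral_N n (d - 1)]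
  -- new node
  have hnew : ∫ ω, ({ω' | M.D (n + 1) (n + 1) ω' = d}).indicator (fun _ => (1 : ℝ)) ω ∂μ
      = (if d = 1 then 1 - (1 + δ) / c else if d = 2 then (1 + δ) / c else 0) := by
    have hpt : ∀ ω, ({ω' | M.D (n + 1) (n + 1) ω' = d}).indicator (fun _ => (1 : ℝ)) ω
        = (if d = 1 then 1 - ({ω' | M.C n ω' = 0}).indicator (fun _ => (1 : ℝ)) ω
            else if d = 2 then ({ω' | M.C n ω' = 0}).indicator (fun _ => (1 : ℝ)) ω
            else 0) := by
      intro ω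
      simp only [Set.indicator_apply, Set.mem_setOf_eq, M.D_succ_new n ω hn]
      by_cases hc0 : M.C n ω = 0 <;> simp only [hc0, if_true, if_false] <;>
        split_ifs <;> norm_num <;> omega
    rw [integral_congr_ae (Filter.Eventually.of_forall hpt)]
    rcases eq_or_ne d 1 with rfl | hd1
    · simp only [if_true]
      rw [integral_sub (integrable_const 1) (intInd (M.measurableSet_C n 0)),
        M.self_integral hn]
      simp [hc]
    · rcases eq_or_ne d 2 with rfl | hd2
      · simp only [if_neg (by norm_num : (2 : ℕ) ≠ 1), if_true, M.self_integral hn, hc]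
      · simp [hd1, hd2]
  rw [hnew]

end PAModel

lemma c_pos {δ : ℝ} (hδ : -1 < δ) (n : ℕ) : 0 < (n : ℝ) * (2 + δ) + (1 + δ) := by
  have h0 : (0 : ℝ) ≤ (n : ℝ) := Nat.cast_nonneg n
  nlinarith

lemma factor_pos {δ : ℝ} (hδ : -1 < δ) {k n : ℕ} (hk : k ≤ n) :
    0 < 1 - ((k : ℝ) + δ) / ((n : ℝ) * (2 + δ) + (1 + δ)) := by
  have hc := c_pos hδ n
  rw [sub_pos, div_lt_one hc]
  have hkn : (k : ℝ) ≤ (n : ℝ) := Nat.cast_le.mpr hk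
  have h0 : (0 : ℝ) ≤ (k : ℝ) := Nat.cast_nonneg k
  nlinarith

lemma aseq_pos {δ : ℝ} (hδ : -1 < δ) (k n : ℕ) : 0 < aseq δ k n := by
  rw [aseq]
  refine inv_pos.mpr (Finset.prod_pos fun j hj => ?_)
  rw [Finset.mem_Ico] at hj
  have h := factor_pos hδ hj.1 (δ := δ)
  rw [show (j : ℝ) * (2 + δ) + (1 + δ) = (j : ℝ) * (2 + δ) + 1 + δ from by ring] at h
  exact h

lemma aseq_succ {δ : ℝ} (hδ : -1 < δ) {k n : ℕ} (h : k ≤ n) :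
    aseq δ k (n + 1)
      = aseq δ k n * (1 - ((k : ℝ) + δ) / ((n : ℝ) * (2 + δ) + (1 + δ)))⁻¹ := by
  rw [aseq, aseq, Finset.prod_Ico_succ_top h, mul_inv,
    show (n : ℝ) * (2 + δ) + 1 + δ = (n : ℝ) * (2 + δ) + (1 + δ) from by ring]

/-- For every `i ≥ 1`,
`(1/a_n^{(i)}) ∑_{d=1}^i b_d^{(i)} (a_{n+1}^{(i)} ν_{n+1}(d) − a_n^{(i)} ν_n(d)) → b_1^{(i)}`
as `n → ∞`, where `ν_n(d) = E N_n(d)`. -/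
theorem limit_deterministic_term {Ω : Type} {mΩ : MeasurableSpace Ω} {μ : Measure Ω}
    [IsProbabilityMeasure μ] {δ : ℝ} (hδ : -1 < δ) (M : PAModel mΩ μ δ)
    (i : ℕ) (hi : 1 ≤ i) :
    Tendsto
      (fun n : ℕ =>
        (aseq δ i n)⁻¹
          * ∑ d ∈ Finset.Icc 1 i,
              bcoef δ i d
                * (aseq δ i (n + 1) * (∫ ω, M.N (n + 1) d ω ∂μ)
                    - aseq δ i n * (∫ ω, M.N n d ω ∂μ)))
      atTop (nhds (bcoef δ i 1)) := by
  -- the limit of the explicit expression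
  have hctop : Tendsto (fun n : ℕ => (n : ℝ) * (2 + δ) + (1 + δ)) atTop atTop := by
    apply Filter.tendsto_atTop_add_const_right
    exact Tendsto.atTop_mul_const (by linarith) tendsto_natCast_atTop_atTop
  have h1 : Tendsto (fun n : ℕ => ((i : ℝ) + δ) / ((n : ℝ) * (2 + δ) + (1 + δ)))
      atTop (nhds 0) := Tendsto.div_atTop tendsto_const_nhds hctop
  have h2 : Tendsto (fun n : ℕ => (1 + δ) / ((n : ℝ) * (2 + δ) + (1 + δ)))
      atTop (nhds 0) := Tendsto.div_atTop tendsto_const_nhds hctop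
  have hg : Tendsto (fun n : ℕ =>
      (1 - ((i : ℝ) + δ) / ((n : ℝ) * (2 + δ) + (1 + δ)))⁻¹
        * (bcoef δ i 1 * (1 - (1 + δ) / ((n : ℝ) * (2 + δ) + (1 + δ)))
          + bcoef δ i 2 * ((1 + δ) / ((n : ℝ) * (2 + δ) + (1 + δ)))))
      atTop (nhds ((1 - (0:ℝ))⁻¹ * (bcoef δ i 1 * (1 - 0) + bcoef δ i 2 * 0))) := by
    exact ((tendsto_const_nhds.sub h1).inv₀ (by norm_num)).mul
      (((tendsto_const_nhds.mul (tendsto_const_nhds.sub h2))).add (tendsto_const_nhds.mul h2))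
  norm_num at hg
  refine Tendsto.congr' ?_ hg
  rw [Filter.EventuallyEq, Filter.eventually_atTop]
  refine ⟨max i 1, fun n hn => ?_⟩
  have hin : i ≤ n := le_trans (le_max_left _ _) hn
  have hn1 : 1 ≤ n := le_trans (le_max_right _ _) hn
  have hane : aseq δ i n ≠ 0 := (aseq_pos hδ i n).ne'
  have hcne : ((n : ℝ) * (2 + δ) + (1 + δ)) ≠ 0 := (c_pos hδ n).ne'
  have hfac : 1 - ((i : ℝ) + δ) / ((n : ℝ) * (2 + δ) + (1 + δ)) ≠ 0 :=
    (factor_pos hδ hin).ne'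
  have hx0 : (∫ ω, M.N n 0 ω ∂μ) = 0 := by
    rw [show (fun ω => M.N n 0 ω) = fun _ => (0 : ℝ) from funext (M.N_zero n)]
    simp
  have hrw : ∀ d ∈ Finset.Icc 1 i,
      bcoef δ i d * (aseq δ i (n + 1) * (∫ ω, M.N (n + 1) d ω ∂μ)
          - aseq δ i n * (∫ ω, M.N n d ω ∂μ))
      = aseq δ i n * (bcoef δ i d *
          ((1 - ((i : ℝ) + δ) / ((n : ℝ) * (2 + δ) + (1 + δ)))⁻¹
            * ((1 - ((d : ℝ) + δ) / ((n : ℝ) * (2 + δ) + (1 + δ)))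
                  * (∫ ω, M.N n d ω ∂μ)
              + ((((d : ℝ) - 1) + δ) / ((n : ℝ) * (2 + δ) + (1 + δ)))
                  * (∫ ω, M.N n (d - 1) ω ∂μ)
              + (if d = 1 then 1 - (1 + δ) / ((n : ℝ) * (2 + δ) + (1 + δ))
                  else if d = 2 then (1 + δ) / ((n : ℝ) * (2 + δ) + (1 + δ)) else 0))
            - (∫ ω, M.N n d ω ∂μ))) := by
    intro d hd
    rw [Finset.mem_Icc] at hd
    rw [M.integral_N_rec hn1 hd.1, aseq_succ hδ hin]
    ring
  rw [Finset.sum_congr rfl hrw, ← Finset.mul_sum, inv_mul_cancel_left₀ hane]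
  exact (alg hδ hi hcne hfac (fun k => ∫ ω, M.N n k ω ∂μ) hx0).symm
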